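/- Let G be a connected graph with BFS layering from s, and suppose π is a path from u to v avoiding L_0, ..., L_{k-1} with u, v ∈ L_k, and suppose π contains a vertex t ∈ L_{k+r} for some r ≥ 1. Then for any μ with 0 ≤ μ ≤ r, there exist vertices x, y ∈ L_{k+μ} on π such that the subpath of π between x and y avoids L_0 ∪ ... ∪ L_{k+μ-1}; in particular x and y lie in the same part at layer k+μ. -/
import Mathlib


/-- `ReachWithin G S u v`: there is a `u`-`v` walk in `G` all of whose vertices lie in `S`. -/
def ReachWithin {V : Type*} (G : SimpleGraph V) (S : Set V) (u v : V) : Prop :=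
  ∃ p : G.Walk u v, ∀ x ∈ p.support, x ∈ S

/-- The part at layer `m` containing `u`. -/
def LayerPart {V : Type*} (G : SimpleGraph V) (s : V) (m : ℕ) (u : V) : Set V :=
  {v | G.dist s v = m ∧ ReachWithin G {x | m ≤ G.dist s x} u v}

private lemma first_crossing {V : Type*} {G : SimpleGraph V} (hconn : G.Connected)
    (s : V) (m : ℕ) : ∀ {a b : V} (w : G.Walk a b), m ≤ G.dist s a → G.dist s b ≤ m →
    ∃ x, ∃ q : G.Walk a x, (∀ z ∈ q.support, z ∈ w.support) ∧
      (∀ z ∈ q.support, m ≤ G.dist s z) ∧ G.dist s x = m := by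
  intro a b w
  induction w with
  | nil =>
    intro h1 h2
    exact ⟨_, SimpleGraph.Walk.nil, fun z hz => hz, by
      simp only [SimpleGraph.Walk.support_nil, List.mem_singleton]
      rintro z rfl; exact h1, le_antisymm h2 h1⟩
  | @cons a c b hadj w ih =>
    intro h1 h2
    by_cases hc : m ≤ G.dist s c
    · obtain ⟨x, q, hq1, hq2, hq3⟩ := ih hc h2
      refine ⟨x, SimpleGraph.Walk.cons hadj q, ?_, ?_, hq3⟩
      · intro z hz
        rw [SimpleGraph.Walk.support_cons, List.mem_cons] at hz ⊢
        exact hz.imp id (fun h => hq1 z h)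
      · intro z hz
        rw [SimpleGraph.Walk.support_cons, List.mem_cons] at hz
        rcases hz with rfl | hz
        · exact h1
        · exact hq2 z hz
    · push_neg at hc
      have hac : G.dist s a ≤ G.dist s c + 1 := by
        have := hconn.dist_triangle (u := s) (v := c) (w := a)
        have h1 : G.dist c a = 1 := (SimpleGraph.dist_eq_one_iff_adj).2 hadj.symm
        omega
      have : G.dist s a = m := by omega
      refine ⟨a, SimpleGraph.Walk.nil, fun z hz => ?_, ?_, this⟩
      · simp only [SimpleGraph.Walk.support_nil, List.mem_singleton] at hz
        subst hz; exact SimpleGraph.Walk.start_mem_support _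
      · simp only [SimpleGraph.Walk.support_nil, List.mem_singleton]
        rintro z rfl; omega

/-- If `π` is a path from `u` to `v` (both in `L_k`) avoiding layers `< k` which contains
a vertex `t ∈ L_{k+r}` with `r ≥ 1`, then for any `μ ≤ r` there are vertices `x, y` of
`π` in `L_{k+μ}` joined, within the vertices of `π`, by a walk avoiding layers
`< k + μ`; in particular `x` and `y` lie in the same part at layer `k + μ`. -/
theorem subpath_vertices_same_part {V : Type*} (G : SimpleGraph V) (hconn : G.Connected)
    (s : V) (k r μ : ℕ) (hr : 1 ≤ r) (hμ : μ ≤ r) (u v : V)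
    (hu : G.dist s u = k) (hv : G.dist s v = k)
    (π : G.Walk u v) (hpath : π.IsPath) (hπ : ∀ z ∈ π.support, k ≤ G.dist s z)
    (t : V) (ht : t ∈ π.support) (htd : G.dist s t = k + r) :
    ∃ x ∈ π.support, ∃ y ∈ π.support,
      G.dist s x = k + μ ∧ G.dist s y = k + μ ∧
      (∃ q : G.Walk x y, (∀ z ∈ q.support, z ∈ π.support) ∧
        ∀ z ∈ q.support, k + μ ≤ G.dist s z) ∧
      y ∈ LayerPart G s (k + μ) x := by
  classical
  have hw1 : (π.takeUntil t ht).reverse.support ⊆ π.support := by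
    rw [SimpleGraph.Walk.support_reverse]
    intro z hz
    exact π.support_takeUntil_subset ht (List.mem_reverse.mp hz)
  have hw2 : (π.dropUntil t ht).support ⊆ π.support := π.support_dropUntil_subset ht
  obtain ⟨x, q1, hq11, hq12, hq13⟩ := first_crossing hconn s (k + μ)
    (π.takeUntil t ht).reverse (by omega) (by omega)
  obtain ⟨y, q2, hq21, hq22, hq23⟩ := first_crossing hconn s (k + μ)
    (π.dropUntil t ht) (by omega) (by omega)
  have hxπ : x ∈ π.support := hw1 (hq11 x q1.end_mem_support)
  have hyπ : y ∈ π.support := hw2 (hq21 y q2.end_mem_support)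
  refine ⟨x, hxπ, y, hyπ, hq13, hq23, ?_, ?_⟩
  · refine ⟨q1.reverse.append q2, ?_, ?_⟩
    · intro z hz
      rw [SimpleGraph.Walk.mem_support_append_iff] at hz
      rcases hz with hz | hz
      · exact hw1 (hq11 z (by rwa [SimpleGraph.Walk.support_reverse, List.mem_reverse] at hz))
      · exact hw2 (hq21 z hz)
    · intro z hz
      rw [SimpleGraph.Walk.mem_support_append_iff] at hz
      rcases hz with hz | hz
      · exact hq12 z (by rwa [SimpleGraph.Walk.support_reverse, List.mem_reverse] at hz)
      · exact hq22 z hz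
  · refine ⟨hq23, q1.reverse.append q2, ?_⟩
    intro z hz
    rw [SimpleGraph.Walk.mem_support_append_iff] at hz
    rcases hz with hz | hz
    · exact hq12 z (by rwa [SimpleGraph.Walk.support_reverse, List.mem_reverse] at hz)
    · exact hq22 z hz
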